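/- With B̄^C_{r,s}(x,z) = z^{r+2s} B^C_{r,s}(x/z) the homogenization of the type-C Bernoulli-like polynomial, for any ε ∈ {-1, 0, 1}: (i) B̄^C_{r,s}(x_p, z) + ε B̄^C_{r,s}(x_q, z) lies in the ideal (x_p + ε x_q), and (ii) B̄^C_{r,s}(x_p, z) + ε B̄^C_{r,s}(x_q, z) ≡ (x_p + ε x_q)(x_p^{r-1} + (ε x_q)^{r-1})(x_p · ε x_q)^s modulo the ideal (x_p + ε x_q - z) in R[x_p, x_q, z]. -/

import Mathlib

open Polynomial

/-- A polynomial over ℝ invariant under shift by 1 is constant. -/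
lemma periodic_const (P : ℝ[X]) (hP : P.comp (X + 1) = P) : P = C (P.eval 0) := by
  have hroot : ∀ n : ℕ, (P - C (P.eval 0)).IsRoot n := by
    intro n
    induction n with
    | zero => simp [IsRoot]
    | succ n ih =>
      have h1 : P.eval ((n : ℝ) + 1) = P.eval (n : ℝ) := by
        conv_rhs => rw [← hP]
        simp [eval_comp]
      simp only [IsRoot, eval_sub, eval_C] at ih ⊢
      push_cast
      rw [h1]
      exact ih
  have hinf : Set.Infinite {x : ℝ | (P - C (P.eval 0)).IsRoot x} := by
    apply Set.Infinite.mono (s := Set.range ((↑) : ℕ → ℝ))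
    · rintro x ⟨n, rfl⟩; exact hroot n
    · exact Set.infinite_range_of_injective Nat.cast_injective
  have := eq_zero_of_infinite_isRoot _ hinf
  linear_combination (norm := ring_nf) this

/-- coefficient of comp with -X -/
lemma coeff_comp_negX (p : ℝ[X]) (n : ℕ) :
    (p.comp (-X)).coeff n = (-1) ^ n * p.coeff n := by
  induction p using Polynomial.induction_on' with
  | add p q hp hq => simp [add_comp, hp, hq]; ring
  | monomial m a =>
    have hm : (monomial m a).comp (-X) = monomial m ((-1) ^ m * a) := by
      rw [← C_mul_X_pow_eq_monomial, mul_comp, C_comp, pow_comp, X_comp, neg_pow,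
        ← C_mul_X_pow_eq_monomial]
      simp only [map_mul, map_pow, map_neg, map_one, C_1]
      ring
    rw [hm, coeff_monomial, coeff_monomial]
    by_cases h : n = m
    · subst h; simp
    · simp [Ne.symm h]

/-- shift-difference controls degree -/
lemma deg_le_diff : ∀ n : ℕ, ∀ p : ℝ[X], p.natDegree ≤ n →
    p.natDegree ≤ (p.comp (X + 1) - p).natDegree + 1 := by
  intro n
  induction n with
  | zero => intro p hp; omega
  | succ n ih =>
    intro p hp
    by_cases h0 : p.natDegree = 0
    · omega
    · set q := derivative p with hq
      have hqd : q.natDegree = p.natDegree - 1 :=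
        natDegree_eq_of_degree_eq_some (degree_derivative_eq p (Nat.pos_of_ne_zero h0))
      have hder : derivative (p.comp (X + 1) - p) = q.comp (X + 1) - q := by
        rw [derivative_sub, derivative_comp]
        simp [hq]
      by_cases hz : q.comp (X + 1) - q = 0
      · -- q is shift-invariant, hence constant
        have : q = C (q.eval 0) := periodic_const q (by linear_combination (norm := ring_nf) hz)
        have : q.natDegree = 0 := by rw [this]; exact natDegree_C _
        omega
      · have h1 : q.natDegree ≤ (q.comp (X + 1) - q).natDegree + 1 := ih q (by omega)
        have h2 : (q.comp (X + 1) - q).natDegree ≤ (p.comp (X + 1) - p).natDegree - 1 := by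
          rw [← hder]; exact natDegree_derivative_le _
        have h3 : (p.comp (X + 1) - p).natDegree ≠ 0 := by
          intro hc
          have : (p.comp (X + 1) - p) = C ((p.comp (X + 1) - p).coeff 0) :=
            eq_C_of_natDegree_eq_zero hc
          have : derivative (p.comp (X + 1) - p) = 0 := by rw [this]; simp
          rw [hder] at this
          exact hz this
        omega

open MvPolynomial in
lemma sub_aeval_mem (σ : Fin 3 → MvPolynomial (Fin 3) ℝ) (k : Fin 3)
    (h : ∀ j, j ≠ k → σ j = MvPolynomial.X j) (f : MvPolynomial (Fin 3) ℝ) :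
    f - MvPolynomial.aeval σ f ∈ Ideal.span {MvPolynomial.X k - σ k} := by
  induction f using MvPolynomial.induction_on with
  | C a => simp only [MvPolynomial.aeval_C, algebraMap_eq, sub_self]; exact Ideal.zero_mem _
  | add p q hp hq =>
    rw [map_add, add_sub_add_comm]
    exact Ideal.add_mem _ hp hq
  | mul_X p n hp =>
    rw [map_mul, MvPolynomial.aeval_X]
    have hsplit : p * X n - MvPolynomial.aeval σ p * σ n
        = (p - MvPolynomial.aeval σ p) * X n + MvPolynomial.aeval σ p * (X n - σ n) := by ring
    rw [hsplit]
    apply Ideal.add_mem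
    · exact Ideal.mul_mem_right _ _ hp
    · by_cases hn : n = k
      · subst hn
        exact Ideal.mul_mem_left _ _ (Ideal.subset_span rfl)
      · rw [h n hn, sub_self, mul_zero]
        exact Ideal.zero_mem _

open MvPolynomial in
lemma eval_aeval' (x : Fin 3 → ℝ) (σ : Fin 3 → MvPolynomial (Fin 3) ℝ)
    (f : MvPolynomial (Fin 3) ℝ) :
    MvPolynomial.eval x (MvPolynomial.aeval σ f)
      = MvPolynomial.eval (fun i => MvPolynomial.eval x (σ i)) f := by
  induction f using MvPolynomial.induction_on with
  | C a => simp [algebraMap_eq]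
  | add p q hp hq => rw [map_add, map_add, map_add, hp, hq]
  | mul_X p n hp => rw [map_mul, MvPolynomial.aeval_X, map_mul, hp]; simp

/-- With B̄^C_{r,s}(x,z) the homogenization of the type-C Bernoulli-like polynomial,
for ε ∈ {-1,0,1}: (i) B̄^C(x_p,z) + ε B̄^C(x_q,z) ∈ (x_p + ε x_q), and
(ii) B̄^C(x_p,z) + ε B̄^C(x_q,z) ≡ (x_p + ε x_q)(x_p^{r-1} + (ε x_q)^{r-1})(x_p·ε x_q)^s
modulo (x_p + ε x_q - z).  Variables: X 0 = x_p, X 1 = x_q, X 2 = z. -/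
theorem stmt11 (r s : ℕ) (hr : 0 < r) (B : ℝ[X])
    (hB : B.comp (X + 1) - B = ((X + 1) ^ (r - 1) + (-X) ^ (r - 1)) * (X + 1) ^ s * (-X) ^ s)
    (hB0 : B.eval 0 = 0)
    (ε : ℝ) (hε : ε = -1 ∨ ε = 0 ∨ ε = 1) :
    ((∑ i ∈ Finset.range (r + 2 * s + 1),
        MvPolynomial.C (B.coeff i) * MvPolynomial.X 0 ^ i
          * MvPolynomial.X 2 ^ (r + 2 * s - i))
      + MvPolynomial.C ε * (∑ i ∈ Finset.range (r + 2 * s + 1),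
        MvPolynomial.C (B.coeff i) * MvPolynomial.X 1 ^ i
          * MvPolynomial.X 2 ^ (r + 2 * s - i))
      ∈ Ideal.span {(MvPolynomial.X 0 + MvPolynomial.C ε * MvPolynomial.X 1 :
          MvPolynomial (Fin 3) ℝ)})
    ∧
    ((∑ i ∈ Finset.range (r + 2 * s + 1),
        MvPolynomial.C (B.coeff i) * MvPolynomial.X 0 ^ i
          * MvPolynomial.X 2 ^ (r + 2 * s - i))
      + MvPolynomial.C ε * (∑ i ∈ Finset.range (r + 2 * s + 1),
        MvPolynomial.C (B.coeff i) * MvPolynomial.X 1 ^ i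
          * MvPolynomial.X 2 ^ (r + 2 * s - i)))
      - (MvPolynomial.X 0 + MvPolynomial.C ε * MvPolynomial.X 1)
          * (MvPolynomial.X 0 ^ (r - 1) + (MvPolynomial.C ε * MvPolynomial.X 1) ^ (r - 1))
          * (MvPolynomial.X 0 * (MvPolynomial.C ε * MvPolynomial.X 1)) ^ s
      ∈ Ideal.span {(MvPolynomial.X 0 + MvPolynomial.C ε * MvPolynomial.X 1
          - MvPolynomial.X 2 : MvPolynomial (Fin 3) ℝ)} := by
  set d := r + 2 * s with hd
  -- degree bound
  have hdB : B.natDegree < d + 1 := by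
    have h1 := deg_le_diff B.natDegree B le_rfl
    rw [hB] at h1
    have h2 : ((((X:ℝ[X]) + 1) ^ (r - 1) + (-X) ^ (r - 1)) * (X + 1) ^ s * (-X) ^ s).natDegree
        ≤ (r - 1) + s + s := by
      have hx1 : ((X:ℝ[X]) + 1).natDegree = 1 := by
        simpa using natDegree_X_add_C (1:ℝ)
      have hnx : (-X : ℝ[X]).natDegree = 1 := by simp
      have hA : (((X:ℝ[X]) + 1) ^ (r - 1) + (-X) ^ (r - 1)).natDegree ≤ r - 1 := by
        apply le_trans (natDegree_add_le _ _)
        simp [natDegree_pow, hx1, hnx]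
      calc ((((X:ℝ[X]) + 1) ^ (r - 1) + (-X) ^ (r - 1)) * (X + 1) ^ s * (-X) ^ s).natDegree
          ≤ ((((X:ℝ[X]) + 1) ^ (r - 1) + (-X) ^ (r - 1)) * (X + 1) ^ s).natDegree
              + ((-X:ℝ[X]) ^ s).natDegree := natDegree_mul_le
        _ ≤ (((X:ℝ[X]) + 1) ^ (r - 1) + (-X) ^ (r - 1)).natDegree
              + (((X:ℝ[X]) + 1) ^ s).natDegree + ((-X:ℝ[X]) ^ s).natDegree := by
            have := natDegree_mul_le (p := (((X:ℝ[X]) + 1) ^ (r - 1) + (-X) ^ (r - 1)))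
              (q := ((X:ℝ[X]) + 1) ^ s)
            omega
        _ ≤ (r - 1) + s + s := by
            rw [natDegree_pow, natDegree_pow, hx1, hnx]
            omega
    omega
  -- oddness at polynomial level
  have hOdd : B.comp (-X) = -B := by
    have e1 : (B.comp (-X)).comp (X + 1) = B.comp (-(X+1)) := by
      rw [comp_assoc]
      congr 1
      simp [neg_comp]
    have e2 : (B.comp (X+1)).comp (-(X+1)) = B.comp (-X) := by
      rw [comp_assoc]
      congr 1
      simp [add_comp]
    have e3 : (B.comp (X+1) - B).comp (-(X+1)) = B.comp (X+1) - B := by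
      rw [hB]
      simp only [mul_comp, add_comp, pow_comp, X_comp, one_comp, neg_comp]
      ring
    have hcomp : (B + B.comp (-X)).comp (X + 1) = B + B.comp (-X) := by
      rw [add_comp, e1]
      have e2' : B.comp (-(X+1)) - B.comp (-X) = -((B.comp (X+1) - B).comp (-(X+1))) := by
        rw [sub_comp, e2]
        ring
      linear_combination e2' - e3
    have hper := periodic_const _ hcomp
    have h0 : (B + B.comp (-X)).eval 0 = 0 := by
      simp [eval_comp, hB0]
    rw [h0, map_zero] at hper
    linear_combination hper
  have heven : ∀ i, Even i → B.coeff i = 0 := by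
    intro i hi
    have h1 := congrArg (fun p => Polynomial.coeff p i) hOdd
    simp only [coeff_comp_negX, coeff_neg] at h1
    rw [hi.neg_one_pow] at h1
    linarith [h1]
  have hkey : ∀ e : ℝ, (e = -1 ∨ e = 0 ∨ e = 1) → ∀ i, B.coeff i * e = B.coeff i * e ^ i := by
    intro e he i
    rcases Nat.even_or_odd i with hi | hi
    · rw [heven i hi]; ring
    · have : e ^ i = e := by
        rcases he with rfl | rfl | rfl
        · exact hi.neg_one_pow
        · have hne : i ≠ 0 := by rintro rfl; simp [Nat.odd_iff] at hi
          rw [zero_pow hne]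
        · simp
      rw [this]
  -- function-level oddness
  have hof : ∀ x : ℝ, B.eval (-x) = - B.eval x := by
    intro x
    have := congrArg (Polynomial.eval x) hOdd
    simpa [eval_comp] using this
  -- homogenized evaluation
  have hsum : ∀ t : ℝ, t ≠ 0 → ∀ x : ℝ,
      (∑ i ∈ Finset.range (d + 1), B.coeff i * x ^ i * t ^ (d - i))
        = t ^ d * B.eval (x / t) := by
    intro t ht x
    rw [eval_eq_sum_range' hdB, Finset.mul_sum]
    apply Finset.sum_congr rfl
    intro i hi
    rw [Finset.mem_range] at hi
    have htd : t ^ d = t ^ (d - i) * t ^ i := by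
      rw [← pow_add]; congr 1; omega
    rw [div_pow, htd]
    field_simp
  -- the main two-variable real identity
  have hstar : ∀ u v : ℝ,
      (∑ i ∈ Finset.range (d + 1), B.coeff i * u ^ i * (u + v) ^ (d - i))
        + (∑ i ∈ Finset.range (d + 1), B.coeff i * v ^ i * (u + v) ^ (d - i))
      = (u + v) * (u ^ (r - 1) + v ^ (r - 1)) * (u * v) ^ s := by
    intro u v
    by_cases ht : u + v = 0
    · have hv : v = -u := by linarith
      have htop : ∀ x : ℝ, (∑ i ∈ Finset.range (d + 1), B.coeff i * x ^ i * (u + v) ^ (d - i))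
          = B.coeff d * x ^ d := by
        intro x
        rw [ht]
        rw [Finset.sum_eq_single_of_mem d (Finset.self_mem_range_succ d)]
        · rw [Nat.sub_self, pow_zero, mul_one]
        · intro i hi hne
          rw [Finset.mem_range] at hi
          rw [zero_pow (by omega : d - i ≠ 0)]
          ring
      rw [htop, htop, ht, hv]
      have h1 := hkey (-1) (Or.inl rfl) d
      rw [neg_pow u d]
      linear_combination (-(u ^ d)) * h1
    · rw [hsum _ ht u, hsum _ ht v]
      have hx := congrArg (Polynomial.eval (-(v / (u + v)))) hB
      simp only [eval_sub, eval_comp, eval_mul, eval_add, eval_pow, eval_X, eval_one,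
        eval_neg] at hx
      have harg : -(v / (u + v)) + 1 = u / (u + v) := by field_simp; ring
      rw [harg] at hx
      have hodd1 : B.eval (-(v / (u + v))) = - B.eval (v / (u + v)) := hof _
      rw [hodd1, neg_neg] at hx
      -- hx : B.eval (u/(u+v)) + B.eval (v/(u+v)) = ((u/t)^(r-1) + (v/t)^(r-1)) * (u/t)^s * (v/t)^s
      obtain ⟨a, rfl⟩ : ∃ a, r = a + 1 := ⟨r - 1, by omega⟩
      have hd' : d = a + 1 + 2 * s := by omega
      have hta : ((u + v) ^ d : ℝ) = (u + v) * (u+v) ^ a * (u+v) ^ s * (u+v) ^ s := by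
        rw [hd']; ring
      rw [hta]
      have hsimp : (a + 1) - 1 = a := by omega
      rw [hsimp] at hx ⊢
      have key : (u+v)^a*(u+v)^s*(u+v)^s*(((u/(u+v))^a + (v/(u+v))^a)*(u/(u+v))^s*(v/(u+v))^s)
          = (u^a+v^a)*(u*v)^s := by
        rw [div_pow, div_pow, div_pow, div_pow]; field_simp; ring
      linear_combination ((u+v)*(u+v)^a*(u+v)^s*(u+v)^s) * hx + (u+v) * key
  constructor
  · -- part (i)
    set σ1 : Fin 3 → MvPolynomial (Fin 3) ℝ :=
      fun j => if j = 0 then -(MvPolynomial.C ε * MvPolynomial.X 1) else MvPolynomial.X j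
      with hσ1def
    have hσ1 : ∀ j, j ≠ (0 : Fin 3) → σ1 j = MvPolynomial.X j := by
      intro j hj; simp [hσ1def, hj]
    have hmem := sub_aeval_mem σ1 0 hσ1
      ((∑ i ∈ Finset.range (d + 1),
        MvPolynomial.C (B.coeff i) * MvPolynomial.X 0 ^ i * MvPolynomial.X 2 ^ (d - i))
      + MvPolynomial.C ε * (∑ i ∈ Finset.range (d + 1),
        MvPolynomial.C (B.coeff i) * MvPolynomial.X 1 ^ i * MvPolynomial.X 2 ^ (d - i)))
    have hgen : (MvPolynomial.X 0 : MvPolynomial (Fin 3) ℝ) - σ1 0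
        = MvPolynomial.X 0 + MvPolynomial.C ε * MvPolynomial.X 1 := by
      simp [hσ1def, sub_neg_eq_add]
    rw [hgen] at hmem
    have hzero : MvPolynomial.aeval σ1
        ((∑ i ∈ Finset.range (d + 1),
          MvPolynomial.C (B.coeff i) * MvPolynomial.X 0 ^ i * MvPolynomial.X 2 ^ (d - i))
        + MvPolynomial.C ε * (∑ i ∈ Finset.range (d + 1),
          MvPolynomial.C (B.coeff i) * MvPolynomial.X 1 ^ i * MvPolynomial.X 2 ^ (d - i)))
        = 0 := by
      apply MvPolynomial.funext
      intro x
      rw [eval_aeval']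
      simp only [map_add, map_mul, map_sum, map_pow, map_neg, map_zero,
        MvPolynomial.eval_C, MvPolynomial.eval_X, hσ1def, reduceIte,
        eq_false (show ¬((2:Fin 3) = 0) by decide), eq_false (show ¬((1:Fin 3) = 0) by decide),
        eq_self_iff_true, if_true, if_false]
      norm_num
      rw [Finset.mul_sum, ← Finset.sum_add_distrib]
      apply Finset.sum_eq_zero
      intro i hi
      have h1 := hkey (-1) (Or.inl rfl) i
      have h2 := hkey ε hε i
      rw [neg_pow, mul_pow]
      linear_combination (-(ε ^ i * (x 1) ^ i * (x 2) ^ (d - i))) * h1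
        + ((x 1) ^ i * (x 2) ^ (d - i)) * h2
    rw [hzero, sub_zero] at hmem
    exact hmem
  · -- part (ii)
    set σ2 : Fin 3 → MvPolynomial (Fin 3) ℝ :=
      fun j => if j = 2 then MvPolynomial.X 0 + MvPolynomial.C ε * MvPolynomial.X 1
        else MvPolynomial.X j with hσ2def
    have hσ2 : ∀ j, j ≠ (2 : Fin 3) → σ2 j = MvPolynomial.X j := by
      intro j hj; simp [hσ2def, hj]
    set q : MvPolynomial (Fin 3) ℝ :=
      ((∑ i ∈ Finset.range (d + 1),
        MvPolynomial.C (B.coeff i) * MvPolynomial.X 0 ^ i * MvPolynomial.X 2 ^ (d - i))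
      + MvPolynomial.C ε * (∑ i ∈ Finset.range (d + 1),
        MvPolynomial.C (B.coeff i) * MvPolynomial.X 1 ^ i * MvPolynomial.X 2 ^ (d - i)))
      - (MvPolynomial.X 0 + MvPolynomial.C ε * MvPolynomial.X 1)
          * (MvPolynomial.X 0 ^ (r - 1) + (MvPolynomial.C ε * MvPolynomial.X 1) ^ (r - 1))
          * (MvPolynomial.X 0 * (MvPolynomial.C ε * MvPolynomial.X 1)) ^ s with hqdef
    have hmem := sub_aeval_mem σ2 2 hσ2 q
    have hgen : (MvPolynomial.X 2 : MvPolynomial (Fin 3) ℝ) - σ2 2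
        = -(MvPolynomial.X 0 + MvPolynomial.C ε * MvPolynomial.X 1 - MvPolynomial.X 2) := by
      simp only [hσ2def, if_pos rfl]
      ring
    rw [hgen, Ideal.span_singleton_neg] at hmem
    have hzero : MvPolynomial.aeval σ2 q = 0 := by
      apply MvPolynomial.funext
      intro x
      rw [eval_aeval']
      simp only [hqdef, map_add, map_mul, map_sum, map_pow, map_neg, map_zero, map_sub,
        MvPolynomial.eval_C, MvPolynomial.eval_X, hσ2def, reduceIte,
        eq_false (show ¬((0:Fin 3) = 2) by decide), eq_false (show ¬((1:Fin 3) = 2) by decide),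
        eq_self_iff_true, if_true, if_false]
      norm_num
      have hb : ε * (∑ i ∈ Finset.range (d + 1),
          B.coeff i * (x 1) ^ i * (x 0 + ε * x 1) ^ (d - i))
          = ∑ i ∈ Finset.range (d + 1),
            B.coeff i * (ε * x 1) ^ i * (x 0 + ε * x 1) ^ (d - i) := by
        rw [Finset.mul_sum]
        refine Finset.sum_congr rfl fun i _ => ?_
        rw [mul_pow]
        linear_combination ((x 1) ^ i * (x 0 + ε * x 1) ^ (d - i)) * (hkey ε hε i)
      linear_combination hstar (x 0) (ε * x 1) + hb
    rw [hzero, sub_zero] at hmem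
    exact hmem
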